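/- arXiv:2301.13075 — 7 statements merged into one kernel-verified Lean document; each statement's English description precedes it below -/
import Mathlib

section
/- Let H be a complex Hilbert space, T > 0, and let Ĥ, V̂ : ℝ → (H →L[ℂ] H) be continuous families of bounded self-adjoint operators. Let ψ, φ : ℝ → H be differentiable with ψ'(t) = -i·Ĥ(t)(ψ(t)) and φ'(t) = -i·(Ĥ(t) + V̂(t))(φ(t)) for all t ∈ [0,T], and suppose ψ(0) = φ(0) with ‖ψ(0)‖ = 1. Then ‖ψ(T) - φ(T)‖ ≤ ∫₀^T ‖V̂(t)‖ dt, where ‖V̂(t)‖ denotes the operator norm. -/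
/-- Theorem 1 of the paper: the distance between the final states of the error-free
Schrödinger evolution `ψ` and the evolution `φ` with deterministic analog control
error `V` is bounded by the time integral of the operator norm of `V`. -/
theorem dist_final_states_le_integral_opNorm
    {H : Type*} [NormedAddCommGroup H] [InnerProductSpace ℂ H] [CompleteSpace H]
    (T : ℝ) (hT : 0 < T)
    (Hop V : ℝ → (H →L[ℂ] H))
    (hHcont : Continuous Hop) (hVcont : Continuous V)
    (hHsa : ∀ t, IsSelfAdjoint (Hop t)) (hVsa : ∀ t, IsSelfAdjoint (V t))
    (ψ φ : ℝ → H)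
    (hψ : ∀ t ∈ Set.Icc (0 : ℝ) T, HasDerivAt ψ ((-Complex.I) • (Hop t) (ψ t)) t)
    (hφ : ∀ t ∈ Set.Icc (0 : ℝ) T, HasDerivAt φ ((-Complex.I) • ((Hop t + V t) (φ t))) t)
    (h0 : ψ 0 = φ 0) (hnorm : ‖ψ 0‖ = 1) :
    ‖ψ T - φ T‖ ≤ ∫ t in (0 : ℝ)..T, ‖V t‖ := by
  letI : InnerProductSpace ℝ H := InnerProductSpace.complexToReal
  have rin : ∀ x y : H, (inner ℝ x y : ℝ) = Complex.re (inner ℂ x y : ℂ) := fun x y => rfl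
  -- the real inner product of x with -i•(A x) vanishes for self-adjoint A
  have key : ∀ (A : H →L[ℂ] H), IsSelfAdjoint A → ∀ x : H,
      (inner ℝ x ((-Complex.I) • (A x)) : ℝ) = 0 := by
    intro A hA x
    have hsym := hA.isSymmetric
    have hreal : (starRingEnd ℂ) (inner ℂ x (A x) : ℂ) = (inner ℂ x (A x) : ℂ) := by
      rw [inner_conj_symm]; exact hsym x x
    have him : (inner ℂ x (A x) : ℂ).im = 0 := by
      have := congrArg Complex.im hreal
      simp only [Complex.conj_im] at this
      linarith
    rw [rin, inner_smul_right]
    simp [Complex.mul_re, Complex.neg_re, Complex.neg_im, Complex.I_re, Complex.I_im, him]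
  have hφc : ContinuousOn φ (Set.Icc 0 T) := fun t ht =>
    ((hφ t ht).continuousAt).continuousWithinAt
  have hψc : ContinuousOn ψ (Set.Icc 0 T) := fun t ht =>
    ((hψ t ht).continuousAt).continuousWithinAt
  -- norm conservation for φ
  have hφnormsq : ∀ t ∈ Set.Icc (0 : ℝ) T, ‖φ t‖ ^ 2 = ‖φ 0‖ ^ 2 := by
    have hc : ContinuousOn (fun t => ‖φ t‖ ^ 2) (Set.Icc 0 T) := (hφc.norm).pow 2
    have hd : ∀ x ∈ Set.Ico (0 : ℝ) T,
        HasDerivWithinAt (fun t => ‖φ t‖ ^ 2) 0 (Set.Ici x) x := by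
      intro x hx
      have h1 := ((hφ x (Set.Ico_subset_Icc_self hx)).hasDerivWithinAt
        (s := Set.Ici x)).norm_sq
      rwa [key (Hop x + V x) ((hHsa x).add (hVsa x)) (φ x), mul_zero] at h1
    exact fun t ht => constant_of_has_deriv_right_zero hc hd t ht
  have hφ1 : ∀ t ∈ Set.Icc (0 : ℝ) T, ‖φ t‖ = 1 := by
    intro t ht
    have h := hφnormsq t ht
    rw [h0] at hnorm
    rw [hnorm] at h
    nlinarith [norm_nonneg (φ t)]
  -- derivative of the difference
  have hδ : ∀ t ∈ Set.Icc (0 : ℝ) T, HasDerivAt (fun s => ψ s - φ s)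
      ((-Complex.I) • (Hop t (ψ t - φ t)) + Complex.I • (V t (φ t))) t := by
    intro t ht
    have h : HasDerivAt (fun s => ψ s - φ s) _ t := (hψ t ht).sub (hφ t ht)
    convert h using 1
    simp only [ContinuousLinearMap.add_apply, map_sub, smul_sub, smul_add]
    module
  have main : ∀ ε > (0 : ℝ), ‖ψ T - φ T‖ ≤ (∫ t in (0 : ℝ)..T, ‖V t‖) + ε * (1 + T) := by
    intro ε hε
    set w : ℝ → ℝ := fun t => (∫ s in (0 : ℝ)..t, ‖V s‖) + ε * (1 + t) with hwdef
    have hwderiv : ∀ x : ℝ, HasDerivAt w (‖V x‖ + ε) x := by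
      intro x
      have h1 : HasDerivAt (fun t => ∫ s in (0 : ℝ)..t, ‖V s‖) ‖V x‖ x :=
        intervalIntegral.integral_hasDerivAt_right
          ((hVcont.norm).intervalIntegrable _ _)
          (hVcont.norm.stronglyMeasurable.stronglyMeasurableAtFilter)
          hVcont.norm.continuousAt
      have h2 : HasDerivAt (fun t : ℝ => ε * (1 + t)) ε x := by
        simpa using ((hasDerivAt_id x).const_add (1 : ℝ)).const_mul ε
      exact h1.add h2
    have hwpos : ∀ x ∈ Set.Icc (0 : ℝ) T, 0 < w x := by
      intro x hx
      have hint : 0 ≤ ∫ s in (0 : ℝ)..x, ‖V s‖ :=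
        intervalIntegral.integral_nonneg hx.1 fun s _ => norm_nonneg _
      have : 0 < ε * (1 + x) := by nlinarith [hx.1]
      simp only [hwdef]; linarith
    have hB : ∀ x : ℝ, HasDerivAt (fun t => (w t) ^ 2) (2 * w x * (‖V x‖ + ε)) x := by
      intro x
      have h : HasDerivAt (fun t => (w t) ^ 2) _ x := (hwderiv x).pow 2
      convert h using 1; ring
    have hfc : ContinuousOn (fun t => ‖ψ t - φ t‖ ^ 2) (Set.Icc 0 T) :=
      ((hψc.sub hφc).norm).pow 2
    have hf' : ∀ x ∈ Set.Ico (0 : ℝ) T,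
        HasDerivWithinAt (fun t => ‖ψ t - φ t‖ ^ 2)
          (2 * (inner ℝ (ψ x - φ x)
            ((-Complex.I) • (Hop x (ψ x - φ x)) + Complex.I • (V x (φ x))) : ℝ))
          (Set.Ici x) x := fun x hx =>
      ((hδ x (Set.Ico_subset_Icc_self hx)).hasDerivWithinAt).norm_sq
    have ha : ‖ψ 0 - φ 0‖ ^ 2 ≤ (w 0) ^ 2 := by
      rw [h0, sub_self, norm_zero]
      simpa using sq_nonneg (w 0)
    have bound : ∀ x ∈ Set.Ico (0 : ℝ) T, ‖ψ x - φ x‖ ^ 2 = (w x) ^ 2 →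
        2 * (inner ℝ (ψ x - φ x)
          ((-Complex.I) • (Hop x (ψ x - φ x)) + Complex.I • (V x (φ x))) : ℝ)
          < 2 * w x * (‖V x‖ + ε) := by
      intro x hx heq
      have hxIcc := Set.Ico_subset_Icc_self hx
      have hwx := hwpos x hxIcc
      have hδw : ‖ψ x - φ x‖ = w x := by
        nlinarith [norm_nonneg (ψ x - φ x)]
      have h1 : (inner ℝ (ψ x - φ x) ((-Complex.I) • (Hop x (ψ x - φ x))) : ℝ) = 0 :=
        key _ (hHsa x) _
      have h2 : (inner ℝ (ψ x - φ x) (Complex.I • (V x (φ x))) : ℝ)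
          ≤ ‖ψ x - φ x‖ * ‖V x‖ := by
        calc (inner ℝ (ψ x - φ x) (Complex.I • (V x (φ x))) : ℝ)
            ≤ ‖ψ x - φ x‖ * ‖Complex.I • (V x (φ x))‖ := real_inner_le_norm _ _
          _ = ‖ψ x - φ x‖ * ‖V x (φ x)‖ := by
              rw [norm_smul, Complex.norm_I, one_mul]
          _ ≤ ‖ψ x - φ x‖ * (‖V x‖ * ‖φ x‖) := by
              gcongr; exact (V x).le_opNorm _
          _ = ‖ψ x - φ x‖ * ‖V x‖ := by rw [hφ1 x hxIcc, mul_one]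
      rw [inner_add_right, h1, zero_add]
      have hVnn : (0 : ℝ) ≤ ‖V x‖ := norm_nonneg _
      nlinarith [h2, hδw]
    have hle : ‖ψ T - φ T‖ ^ 2 ≤ (w T) ^ 2 :=
      image_le_of_deriv_right_lt_deriv_boundary hfc hf' ha hB bound
        (Set.right_mem_Icc.2 hT.le)
    have hwT := hwpos T (Set.right_mem_Icc.2 hT.le)
    have : ‖ψ T - φ T‖ ≤ w T := by nlinarith [norm_nonneg (ψ T - φ T)]
    simpa [hwdef] using this
  refine le_of_forall_pos_le_add fun η hη => ?_
  have h1T : (0 : ℝ) < 1 + T := by linarith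
  have h := main (η / (1 + T)) (div_pos hη h1T)
  have : η / (1 + T) * (1 + T) = η := div_mul_cancel₀ η (ne_of_gt h1T)
  linarith [h, this.le, this.ge]
end

section
/- Let H be a complex Hilbert space, T > 0, and let Ĥ, V̂ : ℝ → (H →L[ℂ] H) be continuous families of bounded self-adjoint operators. Let ψ, φ : ℝ → H be differentiable with ψ'(t) = -i·Ĥ(t)(ψ(t)) and φ'(t) = -i·(Ĥ(t) + V̂(t))(φ(t)) for all t ∈ [0,T], and suppose ψ(0) = φ(0). Then ‖ψ(T) - φ(T)‖ ≤ ∫₀^T ‖V̂(t)(φ(t))‖ dt. -/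
open MeasureTheory intervalIntegral Set

local notation "⟪" x ", " y "⟫" => @inner ℂ _ _ x y

section Aux

variable {H : Type*} [NormedAddCommGroup H] [InnerProductSpace ℂ H] [CompleteSpace H]

lemma aux_re_inner_neg_I_smul (A : H →L[ℂ] H) (hA : IsSelfAdjoint A) (x : H) :
    Complex.re ⟪x, (-Complex.I) • A x⟫ = 0 := by
  have hreal : (starRingEnd ℂ) ⟪x, A x⟫ = ⟪x, A x⟫ := by
    rw [inner_conj_symm]
    calc ⟪A x, x⟫ = ⟪(ContinuousLinearMap.adjoint A) x, x⟫ := by rw [hA.adjoint_eq]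
      _ = ⟪x, A x⟫ := ContinuousLinearMap.adjoint_inner_left A x x
  have him : Complex.im ⟪x, A x⟫ = 0 := Complex.conj_eq_iff_im.mp hreal
  rw [inner_smul_right]
  simp [Complex.mul_re, him]

end Aux



/-- Intermediate bound in the proof of Theorem 1: the distance between the final
states is bounded by the time integral of `‖V(t) φ(t)‖`. -/
theorem dist_final_states_le_integral_norm_apply
    {H : Type*} [NormedAddCommGroup H] [InnerProductSpace ℂ H] [CompleteSpace H]
    (T : ℝ) (hT : 0 < T)
    (Hop V : ℝ → (H →L[ℂ] H))
    (hHcont : Continuous Hop) (hVcont : Continuous V)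
    (hHsa : ∀ t, IsSelfAdjoint (Hop t)) (hVsa : ∀ t, IsSelfAdjoint (V t))
    (ψ φ : ℝ → H)
    (hψ : ∀ t ∈ Set.Icc (0 : ℝ) T, HasDerivAt ψ ((-Complex.I) • (Hop t) (ψ t)) t)
    (hφ : ∀ t ∈ Set.Icc (0 : ℝ) T, HasDerivAt φ ((-Complex.I) • ((Hop t + V t) (φ t))) t)
    (h0 : ψ 0 = φ 0) :
    ‖ψ T - φ T‖ ≤ ∫ t in (0 : ℝ)..T, ‖(V t) (φ t)‖ := by
  have hIcc : Set.uIcc (0 : ℝ) T = Set.Icc 0 T := Set.uIcc_of_le hT.le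
  have hTmem : T ∈ Set.Icc (0 : ℝ) T := ⟨hT.le, le_refl T⟩
  have h0mem : (0 : ℝ) ∈ Set.Icc (0 : ℝ) T := ⟨le_refl 0, hT.le⟩
  set δ : ℝ → H := fun t => ψ t - φ t with hδdef
  set d : ℝ → H := fun t => (-Complex.I) • (Hop t) (δ t) + Complex.I • (V t) (φ t) with hddef
  -- derivative of δ
  have hδderiv : ∀ t ∈ Set.Icc (0 : ℝ) T, HasDerivAt δ (d t) t := by
    intro t ht
    have h1 := (hψ t ht).sub (hφ t ht)
    convert h1 using 1
    · rfl
    simp only [hddef, hδdef, ContinuousLinearMap.add_apply, map_sub, smul_sub, smul_add,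
      neg_smul]
    module
  -- continuity facts
  have hφcont : ContinuousOn φ (Set.Icc 0 T) := fun t ht => ((hφ t ht).continuousAt).continuousWithinAt
  have hψcont : ContinuousOn ψ (Set.Icc 0 T) := fun t ht => ((hψ t ht).continuousAt).continuousWithinAt
  have hδcont : ContinuousOn δ (Set.Icc 0 T) := hψcont.sub hφcont
  set w : ℝ → ℝ := fun t => ‖(V t) (φ t)‖ with hwdef
  have hwcont : ContinuousOn w (Set.Icc 0 T) :=
    (hVcont.continuousOn.clm_apply hφcont).norm
  have hwint : IntervalIntegrable w volume 0 T := by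
    apply ContinuousOn.intervalIntegrable; rwa [hIcc]
  have hwnonneg : ∀ t, 0 ≤ w t := fun t => norm_nonneg _
  have hdcont : ContinuousOn d (Set.Icc 0 T) := by
    apply ContinuousOn.add
    · exact continuousOn_const.smul (hHcont.continuousOn.clm_apply hδcont)
    · exact continuousOn_const.smul (hVcont.continuousOn.clm_apply hφcont)
  -- g = squared norm of δ
  set g : ℝ → ℝ := fun t => Complex.re ⟪δ t, δ t⟫ with hgdef
  have hgnorm : ∀ t, g t = ‖δ t‖ ^ 2 := fun t => by
    show Complex.re ⟪δ t, δ t⟫ = _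
    exact inner_self_eq_norm_sq (𝕜 := ℂ) (x := δ t)
  have hgnonneg : ∀ t, 0 ≤ g t := fun t => by rw [hgnorm]; positivity
  have hgderiv : ∀ t ∈ Set.Icc (0 : ℝ) T,
      HasDerivAt g (2 * Complex.re ⟪δ t, d t⟫) t := by
    intro t ht
    have h1 : HasDerivAt (fun s => ⟪δ s, δ s⟫) (⟪δ t, d t⟫ + ⟪d t, δ t⟫) t :=
      (hδderiv t ht).inner ℂ (hδderiv t ht)
    have h2 := (Complex.reCLM.hasFDerivAt (x := ⟪δ t, δ t⟫)).comp_hasDerivAt t h1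
    have h3 : Complex.reCLM (⟪δ t, d t⟫ + ⟪d t, δ t⟫) = 2 * Complex.re ⟪δ t, d t⟫ := by
      simp only [map_add, Complex.reCLM_apply]
      have hconj : (⟪d t, δ t⟫ : ℂ) = (starRingEnd ℂ) ⟪δ t, d t⟫ := by
        rw [inner_conj_symm]
      rw [hconj, Complex.conj_re]; ring
    rw [h3] at h2
    exact h2
  have hgcont : ContinuousOn g (Set.Icc 0 T) :=
    Complex.continuous_re.comp_continuousOn (hδcont.inner hδcont)
  -- key pointwise bound on the numerator
  have hkey : ∀ t ∈ Set.Icc (0 : ℝ) T, Complex.re ⟪δ t, d t⟫ ≤ ‖δ t‖ * w t := by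
    intro t ht
    have hsplit : ⟪δ t, d t⟫ = ⟪δ t, (-Complex.I) • (Hop t) (δ t)⟫ + ⟪δ t, Complex.I • (V t) (φ t)⟫ := by
      rw [hddef]; exact inner_add_right _ _ _
    have h1 : Complex.re ⟪δ t, (-Complex.I) • (Hop t) (δ t)⟫ = 0 :=
      aux_re_inner_neg_I_smul (Hop t) (hHsa t) (δ t)
    have h2 : Complex.re ⟪δ t, Complex.I • (V t) (φ t)⟫ ≤ ‖δ t‖ * w t := by
      calc Complex.re ⟪δ t, Complex.I • (V t) (φ t)⟫
          ≤ ‖⟪δ t, Complex.I • (V t) (φ t)⟫‖ := Complex.re_le_norm _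
        _ ≤ ‖δ t‖ * ‖Complex.I • (V t) (φ t)‖ := norm_inner_le_norm _ _
        _ = ‖δ t‖ * w t := by rw [norm_smul]; simp [hwdef]
    rw [hsplit, Complex.add_re, h1, zero_add]
    exact h2
  -- now the ε-argument
  have main : ∀ ε : ℝ, 0 < ε → ‖δ T‖ ≤ (∫ t in (0:ℝ)..T, w t) + ε := by
    intro ε hε
    set D : ℝ → ℝ := fun t => Real.sqrt (g t + ε ^ 2) with hDdef
    have hDpos : ∀ t, 0 < D t := fun t =>
      Real.sqrt_pos.mpr (by have := hgnonneg t; positivity)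
    set h' : ℝ → ℝ := fun t => 1 / (2 * D t) * (2 * Complex.re ⟪δ t, d t⟫) with hh'def
    have hDderiv : ∀ t ∈ Set.Icc (0 : ℝ) T, HasDerivAt D (h' t) t := by
      intro t ht
      have hne : g t + ε ^ 2 ≠ 0 := by have := hgnonneg t; positivity
      have h1 : HasDerivAt (fun s => g s + ε ^ 2) (2 * Complex.re ⟪δ t, d t⟫) t :=
        (hgderiv t ht).add_const _
      exact (Real.hasDerivAt_sqrt hne).comp t h1
    -- bound h' ≤ w
    have hh'le : ∀ t ∈ Set.Icc (0 : ℝ) T, h' t ≤ w t := by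
      intro t ht
      have hD := hDpos t
      have hδle : ‖δ t‖ ≤ D t := by
        rw [hDdef]
        have : ‖δ t‖ = Real.sqrt (g t) := by rw [hgnorm]; rw [Real.sqrt_sq_eq_abs, abs_norm]
        rw [this]
        apply Real.sqrt_le_sqrt; nlinarith [sq_nonneg ε]
      have : h' t = Complex.re ⟪δ t, d t⟫ / D t := by
        rw [hh'def]; field_simp
      rw [this]
      rw [div_le_iff₀ hD]
      calc Complex.re ⟪δ t, d t⟫ ≤ ‖δ t‖ * w t := hkey t ht
        _ ≤ D t * w t := by apply mul_le_mul_of_nonneg_right hδle (hwnonneg t)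
        _ = w t * D t := mul_comm _ _
    -- integrability of h'
    have hh'cont : ContinuousOn h' (Set.Icc 0 T) := by
      apply ContinuousOn.mul
      · apply ContinuousOn.div continuousOn_const
        · exact (continuousOn_const.mul
            ((hgcont.add continuousOn_const).sqrt))
        · intro t ht; have := hDpos t; positivity
      · exact continuousOn_const.mul
          (Complex.continuous_re.comp_continuousOn (hδcont.inner hdcont))
    have hh'int : IntervalIntegrable h' volume 0 T := by
      apply ContinuousOn.intervalIntegrable; rwa [hIcc]
    -- FTC
    have hftc : ∫ t in (0:ℝ)..T, h' t = D T - D 0 := by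
      apply intervalIntegral.integral_eq_sub_of_hasDerivAt
      · intro t ht; rw [hIcc] at ht; exact hDderiv t ht
      · exact hh'int
    have hmono : ∫ t in (0:ℝ)..T, h' t ≤ ∫ t in (0:ℝ)..T, w t := by
      apply intervalIntegral.integral_mono_on hT.le hh'int hwint
      intro t ht; exact hh'le t ht
    have hD0 : D 0 = ε := by
      have hδ0 : δ 0 = 0 := by rw [hδdef]; simp [h0]
      have hg0 : g 0 = 0 := by rw [hgnorm, hδ0]; simp
      show Real.sqrt (g 0 + ε ^ 2) = ε
      rw [hg0, zero_add]
      exact Real.sqrt_sq hε.le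
    have hDT : ‖δ T‖ ≤ D T := by
      rw [hDdef]
      have : ‖δ T‖ = Real.sqrt (g T) := by rw [hgnorm]; rw [Real.sqrt_sq_eq_abs, abs_norm]
      rw [this]; apply Real.sqrt_le_sqrt; nlinarith [sq_nonneg ε]
    calc ‖δ T‖ ≤ D T := hDT
      _ = D 0 + (D T - D 0) := by ring
      _ = ε + ∫ t in (0:ℝ)..T, h' t := by rw [hftc, hD0]
      _ ≤ ε + ∫ t in (0:ℝ)..T, w t := by linarith
      _ = (∫ t in (0:ℝ)..T, w t) + ε := by ring
  exact le_of_forall_pos_le_add (fun ε hε => main ε hε)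
end

section
/- Let H be a complex Hilbert space, T > 0, and let Ĥ, V̂ : ℝ → (H →L[ℂ] H) be continuous families of bounded self-adjoint operators satisfying ‖V̂(t)‖ < √2 / T for all t ∈ [0,T]. Let ψ, φ : ℝ → H be differentiable with ψ'(t) = -i·Ĥ(t)(ψ(t)) and φ'(t) = -i·(Ĥ(t) + V̂(t))(φ(t)) for all t ∈ [0,T], and suppose ψ(0) = φ(0) with ‖ψ(0)‖ = 1. Then ‖ψ(T) - φ(T)‖ < √2. -/
open scoped InnerProductSpace
open Set

/-- For a self-adjoint bounded operator `A`, the quadratic form `⟪x, A x⟫` is real. -/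
lemma im_inner_apply_self_eq_zero'
    {H : Type*} [NormedAddCommGroup H] [InnerProductSpace ℂ H] [CompleteSpace H]
    {A : H →L[ℂ] H} (hA : IsSelfAdjoint A) (x : H) :
    (⟪x, A x⟫_ℂ).im = 0 := by
  have hsym := ContinuousLinearMap.isSelfAdjoint_iff_isSymmetric.mp hA
  have h1 : (starRingEnd ℂ) ⟪A x, x⟫_ℂ = ⟪A x, x⟫_ℂ := hsym.conj_inner_sym x x
  have h2 : ⟪x, A x⟫_ℂ = (starRingEnd ℂ) ⟪A x, x⟫_ℂ := (inner_conj_symm _ _).symm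
  rw [h2, h1]
  simpa using Complex.conj_eq_iff_im.mp h1

/-- Threshold condition: if the operator norm of the deterministic control error
satisfies `‖V(t)‖ < √2 / T` on `[0, T]`, then the two final states are strictly
closer than `√2`. -/
theorem dist_final_states_lt_sqrt_two
    {H : Type*} [NormedAddCommGroup H] [InnerProductSpace ℂ H] [CompleteSpace H]
    (T : ℝ) (hT : 0 < T)
    (Hop V : ℝ → (H →L[ℂ] H))
    (hHcont : Continuous Hop) (hVcont : Continuous V)
    (hHsa : ∀ t, IsSelfAdjoint (Hop t)) (hVsa : ∀ t, IsSelfAdjoint (V t))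
    (hVsmall : ∀ t ∈ Set.Icc (0 : ℝ) T, ‖V t‖ < Real.sqrt 2 / T)
    (ψ φ : ℝ → H)
    (hψ : ∀ t ∈ Set.Icc (0 : ℝ) T, HasDerivAt ψ ((-Complex.I) • (Hop t) (ψ t)) t)
    (hφ : ∀ t ∈ Set.Icc (0 : ℝ) T, HasDerivAt φ ((-Complex.I) • ((Hop t + V t) (φ t))) t)
    (h0 : ψ 0 = φ 0) (hnorm : ‖ψ 0‖ = 1) :
    ‖ψ T - φ T‖ < Real.sqrt 2 := by
  -- the max of ‖V‖ on [0,T]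
  obtain ⟨t₀, ht₀, hmax⟩ := isCompact_Icc.exists_isMaxOn (Set.nonempty_Icc.2 hT.le)
    ((hVcont.norm).continuousOn)
  set M : ℝ := ‖V t₀‖ with hMdef
  have hM0 : 0 ≤ M := norm_nonneg _
  have hMlt : M < Real.sqrt 2 / T := hVsmall t₀ ht₀
  have hMbound : ∀ t ∈ Icc (0:ℝ) T, ‖V t‖ ≤ M := fun t ht => hmax ht
  -- norm preservation for φ: ‖φ c‖ = 1 on [0,T]
  have hn : ∀ t ∈ Icc (0:ℝ) T, HasDerivAt (fun s => (⟪φ s, φ s⟫_ℂ).re) 0 t := by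
    intro t ht
    have hd := ((hφ t ht).inner ℂ (hφ t ht))
    have hd2 := (Complex.reCLM.hasFDerivAt.comp_hasDerivAt t hd)
    refine hd2.congr_deriv ?_
    have him : (⟪φ t, (Hop t + V t) (φ t)⟫_ℂ).im = 0 :=
      im_inner_apply_self_eq_zero' ((hHsa t).add (hVsa t)) (φ t)
    simp only [Complex.reCLM_apply, inner_smul_left, inner_smul_right, map_neg, Complex.conj_I]
    have hw : ⟪(Hop t + V t) (φ t), φ t⟫_ℂ = (starRingEnd ℂ) ⟪φ t, (Hop t + V t) (φ t)⟫_ℂ :=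
      (inner_conj_symm _ _).symm
    rw [hw]
    simp only [Complex.add_re, Complex.mul_re, Complex.neg_re, Complex.neg_im,
      Complex.I_re, Complex.I_im, Complex.conj_re, Complex.conj_im]
    simp only [ContinuousLinearMap.add_apply] at him
    simpa [inner_add_right] using him
  have hφcont : ContinuousOn (fun s => (⟪φ s, φ s⟫_ℂ).re) (Icc 0 T) :=
    fun t ht => ((hn t ht).continuousAt).continuousWithinAt
  have hφ1 : ∀ c ∈ Icc (0:ℝ) T, ‖φ c‖ = 1 := by
    intro c hc
    have hval : (⟪φ c, φ c⟫_ℂ).re = (⟪φ 0, φ 0⟫_ℂ).re := by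
      rcases eq_or_lt_of_le hc.1 with h | h
      · rw [← h]
      · obtain ⟨d, hd, hslope⟩ := exists_hasDerivAt_eq_slope (fun s => (⟪φ s, φ s⟫_ℂ).re)
          (fun _ => (0:ℝ)) h (hφcont.mono (Icc_subset_Icc le_rfl hc.2))
          (fun x hx => hn x ⟨le_of_lt hx.1, le_trans hx.2.le hc.2⟩)
        have := hslope.symm
        field_simp at this
        linarith [this]
    have h0n : (⟪φ 0, φ 0⟫_ℂ).re = 1 := by
      have : (⟪φ 0, φ 0⟫_ℂ).re = ‖φ 0‖ ^ 2 := by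
        simpa using (inner_self_eq_norm_sq (𝕜 := ℂ) (φ 0))
      rw [this, ← h0, hnorm]; norm_num
    have : ‖φ c‖ ^ 2 = 1 := by
      have h2 : (⟪φ c, φ c⟫_ℂ).re = ‖φ c‖ ^ 2 := by
        simpa using (inner_self_eq_norm_sq (𝕜 := ℂ) (φ c))
      rw [← h2, hval, h0n]
    nlinarith [norm_nonneg (φ c)]
  -- the difference vector
  set δ : ℝ → H := fun s => ψ s - φ s with hδdef
  have hδ0 : δ 0 = 0 := by simp [hδdef, h0]
  set D : ℝ → H := fun t => (-Complex.I) • (Hop t) (δ t) + Complex.I • (V t) (φ t) with hDdef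
  have hδd : ∀ t ∈ Icc (0:ℝ) T, HasDerivAt δ (D t) t := by
    intro t ht
    have h := (hψ t ht).sub (hφ t ht)
    refine h.congr_deriv ?_
    simp only [hDdef, hδdef, ContinuousLinearMap.add_apply, map_sub, smul_sub, smul_add]
    module
  set e : ℝ → ℝ := fun t => (⟪δ t, D t⟫_ℂ + ⟪D t, δ t⟫_ℂ).re with hedef
  have hr : ∀ t ∈ Icc (0:ℝ) T, HasDerivAt (fun s => (⟪δ s, δ s⟫_ℂ).re) (e t) t := by
    intro t ht
    exact Complex.reCLM.hasFDerivAt.comp_hasDerivAt t ((hδd t ht).inner ℂ (hδd t ht))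
  have hrnorm : ∀ s, (⟪δ s, δ s⟫_ℂ).re = ‖δ s‖ ^ 2 := fun s => by
    simpa using inner_self_eq_norm_sq (𝕜 := ℂ) (δ s)
  have hrpos : ∀ s, 0 ≤ (⟪δ s, δ s⟫_ℂ).re := fun s => by rw [hrnorm]; positivity
  -- pointwise bound on e
  have hebound : ∀ c ∈ Icc (0:ℝ) T, e c ≤ 2 * (M * ‖δ c‖) := by
    intro c hc
    have him : (⟪δ c, (Hop c) (δ c)⟫_ℂ).im = 0 := im_inner_apply_self_eq_zero' (hHsa c) (δ c)
    have hsplit : e c = 2 * (⟪δ c, D c⟫_ℂ).re := by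
      have hconj : ⟪D c, δ c⟫_ℂ = (starRingEnd ℂ) ⟪δ c, D c⟫_ℂ := (inner_conj_symm _ _).symm
      rw [hedef]
      simp only [hconj, Complex.add_re, Complex.conj_re]
      ring
    have h1 : (⟪δ c, D c⟫_ℂ).re
        = ((-Complex.I) * ⟪δ c, (Hop c) (δ c)⟫_ℂ).re + (⟪δ c, Complex.I • (V c) (φ c)⟫_ℂ).re := by
      rw [hDdef]
      simp only [inner_add_right, inner_smul_right, Complex.add_re]
    have h2 : ((-Complex.I) * ⟪δ c, (Hop c) (δ c)⟫_ℂ).re = 0 := by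
      simp [Complex.mul_re, him]
    have h3 : (⟪δ c, Complex.I • (V c) (φ c)⟫_ℂ).re ≤ M * ‖δ c‖ := by
      have hcs : ‖⟪δ c, Complex.I • (V c) (φ c)⟫_ℂ‖ ≤ ‖δ c‖ * ‖Complex.I • (V c) (φ c)‖ :=
        norm_inner_le_norm _ _
      have hVn : ‖Complex.I • (V c) (φ c)‖ ≤ M := by
        rw [norm_smul]
        simp only [Complex.norm_I, one_mul]
        calc ‖(V c) (φ c)‖ ≤ ‖V c‖ * ‖φ c‖ := (V c).le_opNorm _
          _ = ‖V c‖ := by rw [hφ1 c hc, mul_one]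
          _ ≤ M := hMbound c hc
      have hre : (⟪δ c, Complex.I • (V c) (φ c)⟫_ℂ).re ≤ ‖⟪δ c, Complex.I • (V c) (φ c)⟫_ℂ‖ :=
        Complex.re_le_norm _
      calc (⟪δ c, Complex.I • (V c) (φ c)⟫_ℂ).re ≤ ‖δ c‖ * ‖Complex.I • (V c) (φ c)‖ :=
            le_trans hre hcs
        _ ≤ ‖δ c‖ * M := by
            exact mul_le_mul_of_nonneg_left hVn (norm_nonneg _)
        _ = M * ‖δ c‖ := mul_comm _ _
    rw [hsplit, h1, h2, zero_add]
    linarith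
  -- epsilon argument
  have key : ∀ ε > (0:ℝ), ‖δ T‖ ≤ M * T + ε := by
    intro ε hε
    set g : ℝ → ℝ := fun s => Real.sqrt ((⟪δ s, δ s⟫_ℂ).re + ε ^ 2) with hgdef
    have hne : ∀ s : ℝ, (⟪δ s, δ s⟫_ℂ).re + ε ^ 2 ≠ 0 := by
      intro s
      have := hrpos s
      positivity
    have hg : ∀ t ∈ Icc (0:ℝ) T,
        HasDerivAt g (1 / (2 * Real.sqrt ((⟪δ t, δ t⟫_ℂ).re + ε ^ 2)) * e t) t := by
      intro t ht
      exact (Real.hasDerivAt_sqrt (hne t)).comp t ((hr t ht).add_const (ε ^ 2))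
    have hgc : ContinuousOn g (Icc 0 T) :=
      fun t ht => ((hg t ht).continuousAt).continuousWithinAt
    obtain ⟨c, hc, hslope⟩ := exists_hasDerivAt_eq_slope g
      (fun t => 1 / (2 * Real.sqrt ((⟪δ t, δ t⟫_ℂ).re + ε ^ 2)) * e t) hT hgc
      (fun x hx => hg x ⟨hx.1.le, hx.2.le⟩)
    have hcI : c ∈ Icc (0:ℝ) T := ⟨hc.1.le, hc.2.le⟩
    have hsq : Real.sqrt ((⟪δ c, δ c⟫_ℂ).re + ε ^ 2) > 0 := by
      apply Real.sqrt_pos.mpr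
      have := hrpos c
      positivity
    have hδle : ‖δ c‖ ≤ Real.sqrt ((⟪δ c, δ c⟫_ℂ).re + ε ^ 2) := by
      have h1 : ‖δ c‖ = Real.sqrt ((⟪δ c, δ c⟫_ℂ).re) := by
        rw [hrnorm, Real.sqrt_sq (norm_nonneg _)]
      rw [h1]
      exact Real.sqrt_le_sqrt (by nlinarith [sq_nonneg ε])
    have hgd : 1 / (2 * Real.sqrt ((⟪δ c, δ c⟫_ℂ).re + ε ^ 2)) * e c ≤ M := by
      have hec := hebound c hcI
      rw [div_mul_eq_mul_div, one_mul, div_le_iff₀ (by positivity)]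
      calc e c ≤ 2 * (M * ‖δ c‖) := hec
        _ ≤ 2 * (M * Real.sqrt ((⟪δ c, δ c⟫_ℂ).re + ε ^ 2)) := by
            apply mul_le_mul_of_nonneg_left _ (by norm_num)
            exact mul_le_mul_of_nonneg_left hδle hM0
        _ = M * (2 * Real.sqrt ((⟪δ c, δ c⟫_ℂ).re + ε ^ 2)) := by ring
    rw [sub_zero] at hslope
    have hslope2 : (g T - g 0) / T ≤ M := by rw [← hslope]; exact hgd
    have hg0 : g 0 = ε := by
      rw [hgdef]
      simp only [hδ0, inner_zero_left, Complex.zero_re, zero_add]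
      exact Real.sqrt_sq hε.le
    have hgT : ‖δ T‖ ≤ g T := by
      have h1 : ‖δ T‖ = Real.sqrt ((⟪δ T, δ T⟫_ℂ).re) := by
        rw [hrnorm, Real.sqrt_sq (norm_nonneg _)]
      rw [h1]
      exact Real.sqrt_le_sqrt (by nlinarith [sq_nonneg ε])
    have : g T ≤ M * T + ε := by
      rw [div_le_iff₀ hT] at hslope2
      linarith [hslope2, hg0.symm ▸ (le_refl (g 0))]
    linarith
  have hfinal : ‖δ T‖ ≤ M * T := le_of_forall_pos_le_add key
  have : M * T < Real.sqrt 2 := by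
    have := mul_lt_mul_of_pos_right hMlt hT
    rwa [div_mul_cancel₀ _ hT.ne'] at this
  calc ‖ψ T - φ T‖ = ‖δ T‖ := rfl
    _ ≤ M * T := hfinal
    _ < Real.sqrt 2 := this
end

section
/- Let H be a complex Hilbert space, T > 0, and let Ĥ, V̂ : ℝ → (H →L[ℂ] H) be continuous families of bounded self-adjoint operators with v := ∫₀^T ‖V̂(t)‖ dt < √2. Let ψ, φ : ℝ → H be differentiable with ψ'(t) = -i·Ĥ(t)(ψ(t)) and φ'(t) = -i·(Ĥ(t) + V̂(t))(φ(t)) for all t ∈ [0,T], and suppose ψ(0) = φ(0) with ‖ψ(0)‖ = 1. Then Re⟨ψ(T), φ(T)⟩ ≥ 1 - v²/2 > 0, i.e. the two final states have non-zero overlap. -/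
open scoped ComplexConjugate

lemma aux_sym {H : Type*} [NormedAddCommGroup H] [InnerProductSpace ℂ H] [CompleteSpace H]
    {A : H →L[ℂ] H} (hA : IsSelfAdjoint A) (x y : H) :
    (inner ℂ (A x) y : ℂ) = inner ℂ x (A y) :=
  (ContinuousLinearMap.isSelfAdjoint_iff_isSymmetric.mp hA) x y

lemma aux_real {H : Type*} [NormedAddCommGroup H] [InnerProductSpace ℂ H] [CompleteSpace H]
    {A : H →L[ℂ] H} (hA : IsSelfAdjoint A) (x : H) :
    (inner ℂ x (A x) : ℂ).im = 0 := by
  have h1 : (inner ℂ (A x) x : ℂ) = inner ℂ x (A x) := aux_sym hA x x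
  have h2 : (inner ℂ (A x) x : ℂ) = conj (inner ℂ x (A x) : ℂ) := (inner_conj_symm _ _).symm
  have := h1.symm.trans h2
  exact Complex.conj_eq_iff_im.mp this.symm

lemma aux_norm_preserved {H : Type*} [NormedAddCommGroup H] [InnerProductSpace ℂ H]
    [CompleteSpace H] {T : ℝ} (A : ℝ → H →L[ℂ] H)
    (hA : ∀ t, IsSelfAdjoint (A t)) (χ : ℝ → H)
    (hχ : ∀ t ∈ Set.Icc (0 : ℝ) T, HasDerivAt χ ((-Complex.I) • (A t) (χ t)) t) :
    ∀ t ∈ Set.Icc (0 : ℝ) T, ‖χ t‖ = ‖χ 0‖ := by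
  intro t ht
  set F : ℝ → ℝ := fun s => (inner ℂ (χ s) (χ s) : ℂ).re with hF
  have hderiv : ∀ s ∈ Set.Icc (0 : ℝ) T, HasDerivAt F 0 s := by
    intro s hs
    have hG : HasDerivAt (fun s => (inner ℂ (χ s) (χ s) : ℂ))
        ((inner ℂ (χ s) ((-Complex.I) • (A s) (χ s)) : ℂ)
          + inner ℂ ((-Complex.I) • (A s) (χ s)) (χ s)) s :=
      HasDerivAt.inner ℂ (hχ s hs) (hχ s hs)
    have hre : HasDerivAt F
        (((inner ℂ (χ s) ((-Complex.I) • (A s) (χ s)) : ℂ)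
          + inner ℂ ((-Complex.I) • (A s) (χ s)) (χ s)).re) s :=
      (Complex.reCLM.hasFDerivAt.comp_hasDerivAt s hG)
    convert hre using 1
    set z : ℂ := inner ℂ (χ s) ((A s) (χ s)) with hz
    have h1 : (inner ℂ (χ s) ((-Complex.I) • (A s) (χ s)) : ℂ) = (-Complex.I) * z := by
      rw [inner_smul_right]
    have h2 : (inner ℂ ((-Complex.I) • (A s) (χ s)) (χ s) : ℂ)
        = conj (-Complex.I) * (inner ℂ ((A s) (χ s)) (χ s) : ℂ) := by
      rw [inner_smul_left]
    have h3 : (inner ℂ ((A s) (χ s)) (χ s) : ℂ) = z := aux_sym (hA s) _ _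
    have hzim : z.im = 0 := aux_real (hA s) _
    rw [h1, h2, h3]
    simp [Complex.mul_re, Complex.mul_im, hzim]
  have hsub : Set.uIcc (0 : ℝ) t ⊆ Set.Icc (0 : ℝ) T := by
    rw [Set.uIcc_of_le ht.1]
    exact Set.Icc_subset_Icc le_rfl ht.2
  have hftc : F t - F 0 = ∫ s in (0 : ℝ)..t, (0 : ℝ) :=
    (intervalIntegral.integral_eq_sub_of_hasDerivAt
      (fun s hs => hderiv s (hsub hs)) intervalIntegrable_const).symm
  simp at hftc
  have hFt : F t = ‖χ t‖ ^ 2 := inner_self_eq_norm_sq (𝕜 := ℂ) _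
  have hF0 : F 0 = ‖χ 0‖ ^ 2 := inner_self_eq_norm_sq (𝕜 := ℂ) _
  nlinarith [norm_nonneg (χ t), norm_nonneg (χ 0), hftc]



/-- Eq. (12) of the paper: if the integrated error strength
`v = ∫₀ᵀ ‖V(t)‖ dt` is less than `√2`, then the final states have non-zero
overlap: `Re ⟨ψ(T), φ(T)⟩ ≥ 1 - v²/2 > 0`. -/
theorem overlap_final_states_pos
    {H : Type*} [NormedAddCommGroup H] [InnerProductSpace ℂ H] [CompleteSpace H]
    (T : ℝ) (hT : 0 < T)
    (Hop V : ℝ → (H →L[ℂ] H))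
    (hHcont : Continuous Hop) (hVcont : Continuous V)
    (hHsa : ∀ t, IsSelfAdjoint (Hop t)) (hVsa : ∀ t, IsSelfAdjoint (V t))
    (v : ℝ) (hv : v = ∫ t in (0 : ℝ)..T, ‖V t‖) (hvlt : v < Real.sqrt 2)
    (ψ φ : ℝ → H)
    (hψ : ∀ t ∈ Set.Icc (0 : ℝ) T, HasDerivAt ψ ((-Complex.I) • (Hop t) (ψ t)) t)
    (hφ : ∀ t ∈ Set.Icc (0 : ℝ) T, HasDerivAt φ ((-Complex.I) • ((Hop t + V t) (φ t))) t)
    (h0 : ψ 0 = φ 0) (hnorm : ‖ψ 0‖ = 1) :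
    (inner ℂ (ψ T) (φ T) : ℂ).re ≥ 1 - v ^ 2 / 2 ∧ 1 - v ^ 2 / 2 > 0 := by
  have hT' : (0 : ℝ) ≤ T := hT.le
  have hTmem : T ∈ Set.Icc (0 : ℝ) T := ⟨hT', le_rfl⟩
  -- v ≥ 0
  have hv0 : 0 ≤ v := by
    rw [hv]
    exact intervalIntegral.integral_nonneg hT' (fun t _ => norm_nonneg _)
  have hvsq : v ^ 2 < 2 := by
    nlinarith [Real.sq_sqrt (by norm_num : (0:ℝ) ≤ 2), Real.sqrt_nonneg 2]
  -- norm preservation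
  have hψn : ∀ t ∈ Set.Icc (0 : ℝ) T, ‖ψ t‖ = 1 := by
    intro t ht
    rw [aux_norm_preserved Hop hHsa ψ hψ t ht, hnorm]
  have hφ' : ∀ t ∈ Set.Icc (0 : ℝ) T,
      HasDerivAt φ ((-Complex.I) • ((fun t => Hop t + V t) t) (φ t)) t := hφ
  have hφn : ∀ t ∈ Set.Icc (0 : ℝ) T, ‖φ t‖ = 1 := by
    intro t ht
    rw [aux_norm_preserved (fun t => Hop t + V t) (fun t => (hHsa t).add (hVsa t)) φ hφ' t ht,
      ← h0, hnorm]
  -- the overlap function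
  set f : ℝ → ℝ := fun t => (inner ℂ (ψ t) (φ t) : ℂ).re with hfdef
  set f' : ℝ → ℝ := fun t => ((-Complex.I) * (inner ℂ (ψ t) ((V t) (φ t)) : ℂ)).re with hf'def
  have hf' : ∀ t ∈ Set.Icc (0 : ℝ) T, HasDerivAt f (f' t) t := by
    intro t ht
    have hG : HasDerivAt (fun s => (inner ℂ (ψ s) (φ s) : ℂ))
        ((inner ℂ (ψ t) ((-Complex.I) • ((Hop t + V t) (φ t))) : ℂ)
          + inner ℂ ((-Complex.I) • (Hop t) (ψ t)) (φ t)) t :=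
      HasDerivAt.inner ℂ (hψ t ht) (hφ t ht)
    have hre := Complex.reCLM.hasFDerivAt.comp_hasDerivAt t hG
    convert hre using 1
    case e'_4 => rfl
    case e'_5 => rfl
    case e'_8 => rfl
    have h1 : (inner ℂ (ψ t) ((-Complex.I) • ((Hop t + V t) (φ t))) : ℂ)
        = (-Complex.I) * ((inner ℂ (ψ t) ((Hop t) (φ t)) : ℂ) + inner ℂ (ψ t) ((V t) (φ t))) := by
      rw [inner_smul_right, ContinuousLinearMap.add_apply, inner_add_right]
    have h2 : (inner ℂ ((-Complex.I) • (Hop t) (ψ t)) (φ t) : ℂ)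
        = conj (-Complex.I) * (inner ℂ (ψ t) ((Hop t) (φ t)) : ℂ) := by
      rw [inner_smul_left, aux_sym (hHsa t)]
    have hconj : conj (-Complex.I) = Complex.I := by simp
    rw [h1, h2, hconj]
    simp only [hf'def, Complex.reCLM_apply]
    congr 1
    ring
  -- continuity facts
  have hψc : ContinuousOn ψ (Set.Icc (0 : ℝ) T) :=
    fun t ht => (hψ t ht).continuousAt.continuousWithinAt
  have hφc : ContinuousOn φ (Set.Icc (0 : ℝ) T) :=
    fun t ht => (hφ t ht).continuousAt.continuousWithinAt
  have hVφc : ContinuousOn (fun t => (V t) (φ t)) (Set.Icc (0 : ℝ) T) :=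
    (hVcont.continuousOn).clm_apply hφc
  have hf'c : ContinuousOn f' (Set.Icc (0 : ℝ) T) := by
    apply Complex.continuous_re.comp_continuousOn
    exact continuousOn_const.mul (hψc.inner hVφc)
  have hfc : ContinuousOn f (Set.Icc (0 : ℝ) T) :=
    Complex.continuous_re.comp_continuousOn (hψc.inner hφc)
  -- pointwise facts about f
  have hdsq : ∀ t ∈ Set.Icc (0 : ℝ) T, ‖ψ t - φ t‖ ^ 2 = 2 - 2 * f t := by
    intro t ht
    rw [norm_sub_sq (𝕜 := ℂ), hψn t ht, hφn t ht]
    simp only [RCLike.re_to_complex]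
    ring
  have hfle : ∀ t ∈ Set.Icc (0 : ℝ) T, 0 ≤ 2 - 2 * f t := by
    intro t ht
    rw [← hdsq t ht]; positivity
  -- key derivative bound
  have hb : ∀ t ∈ Set.Icc (0 : ℝ) T, -f' t ≤ ‖V t‖ * Real.sqrt (2 - 2 * f t) := by
    intro t ht
    have hsplit : (inner ℂ (ψ t) ((V t) (φ t)) : ℂ)
        = (inner ℂ (ψ t - φ t) ((V t) (φ t)) : ℂ) + inner ℂ (φ t) ((V t) (φ t)) := by
      rw [inner_sub_left]; ring
    have hzim : ((-Complex.I) * (inner ℂ (φ t) ((V t) (φ t)) : ℂ)).re = 0 := by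
      have := aux_real (hVsa t) (φ t)
      simp [Complex.mul_re, this]
    have hval : f' t = ((-Complex.I) * (inner ℂ (ψ t - φ t) ((V t) (φ t)) : ℂ)).re := by
      simp only [hf'def, hsplit, mul_add, Complex.add_re, hzim, add_zero]
    have habs : |((-Complex.I) * (inner ℂ (ψ t - φ t) ((V t) (φ t)) : ℂ)).re|
        ≤ ‖ψ t - φ t‖ * ‖(V t) (φ t)‖ := by
      calc |((-Complex.I) * (inner ℂ (ψ t - φ t) ((V t) (φ t)) : ℂ)).re|
          ≤ ‖(-Complex.I) * (inner ℂ (ψ t - φ t) ((V t) (φ t)) : ℂ)‖ :=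
            Complex.abs_re_le_norm _
        _ = ‖(inner ℂ (ψ t - φ t) ((V t) (φ t)) : ℂ)‖ := by
            rw [norm_mul]; simp
        _ ≤ ‖ψ t - φ t‖ * ‖(V t) (φ t)‖ := norm_inner_le_norm _ _
    have hVb : ‖(V t) (φ t)‖ ≤ ‖V t‖ := by
      calc ‖(V t) (φ t)‖ ≤ ‖V t‖ * ‖φ t‖ := (V t).le_opNorm _
      _ = ‖V t‖ := by rw [hφn t ht, mul_one]
    have hnd : ‖ψ t - φ t‖ = Real.sqrt (2 - 2 * f t) := by
      rw [← hdsq t ht, Real.sqrt_sq (norm_nonneg _)]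
    have h1 : -f' t ≤ ‖ψ t - φ t‖ * ‖(V t) (φ t)‖ := by
      rw [hval]
      exact (neg_le_abs _).trans habs
    calc -f' t ≤ ‖ψ t - φ t‖ * ‖(V t) (φ t)‖ := h1
      _ ≤ ‖ψ t - φ t‖ * ‖V t‖ := by
          exact mul_le_mul_of_nonneg_left hVb (norm_nonneg _)
      _ = ‖V t‖ * Real.sqrt (2 - 2 * f t) := by rw [hnd]; ring
  -- f 0 = 1
  have hf0 : f 0 = 1 := by
    have h0mem : (0 : ℝ) ∈ Set.Icc (0 : ℝ) T := ⟨le_rfl, hT'⟩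
    have : (2 : ℝ) - 2 * f 0 = 0 := by
      rw [← hdsq 0 h0mem, h0, sub_self, norm_zero]
      norm_num
    linarith
  -- epsilon argument
  have key : ∀ ε : ℝ, 0 < ε → Real.sqrt (2 - 2 * f T) ≤ v + ε := by
    intro ε hε
    set c : ℝ → ℝ := fun t => 2 - 2 * f t + ε ^ 2 with hc
    have hcpos : ∀ t ∈ Set.Icc (0 : ℝ) T, 0 < c t := by
      intro t ht
      have := hfle t ht
      simp only [hc]
      nlinarith
    set u : ℝ → ℝ := fun t => Real.sqrt (c t) with hu
    set w : ℝ → ℝ := fun t => 1 / (2 * Real.sqrt (c t)) * (-2 * f' t) with hw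
    have hud : ∀ t ∈ Set.Icc (0 : ℝ) T, HasDerivAt u (w t) t := by
      intro t ht
      have hcd : HasDerivAt c (-2 * f' t) t := by
        have := ((hf' t ht).const_mul (2 : ℝ)).const_sub 2
        have h2 := this.add_const (ε ^ 2)
        convert h2 using 1
        case e'_4 => rfl
        case e'_5 => rfl
        ring
      exact (Real.hasDerivAt_sqrt (ne_of_gt (hcpos t ht))).comp t hcd
    have hwb : ∀ t ∈ Set.Icc (0 : ℝ) T, w t ≤ ‖V t‖ := by
      intro t ht
      have hD : 0 < Real.sqrt (c t) := Real.sqrt_pos.mpr (hcpos t ht)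
      have hle : Real.sqrt (2 - 2 * f t) ≤ Real.sqrt (c t) := by
        apply Real.sqrt_le_sqrt
        simp only [hc]; nlinarith
      have hnum : -f' t ≤ ‖V t‖ * Real.sqrt (c t) :=
        (hb t ht).trans (mul_le_mul_of_nonneg_left hle (norm_nonneg _))
      have heq : w t = (-f' t) / Real.sqrt (c t) := by
        simp only [hw]; field_simp
      rw [heq, div_le_iff₀ hD]
      exact hnum
    have hwc : ContinuousOn w (Set.Icc (0 : ℝ) T) := by
      apply ContinuousOn.mul
      · apply ContinuousOn.div continuousOn_const
        · exact (continuousOn_const.mul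
            ((continuousOn_const.sub (continuousOn_const.mul hfc)).add
              continuousOn_const).sqrt)
        · intro t ht
          have hD : 0 < Real.sqrt (c t) := Real.sqrt_pos.mpr (hcpos t ht)
          positivity
      · exact continuousOn_const.mul hf'c
    have hwint : IntervalIntegrable w MeasureTheory.volume 0 T := by
      apply ContinuousOn.intervalIntegrable
      rwa [Set.uIcc_of_le hT']
    have hVint : IntervalIntegrable (fun t => ‖V t‖) MeasureTheory.volume 0 T :=
      (hVcont.norm).intervalIntegrable _ _
    have hftc : u T - u 0 = ∫ t in (0 : ℝ)..T, w t := by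
      apply (intervalIntegral.integral_eq_sub_of_hasDerivAt _ hwint).symm
      intro t ht
      rw [Set.uIcc_of_le hT'] at ht
      exact hud t ht
    have hmono : (∫ t in (0 : ℝ)..T, w t) ≤ ∫ t in (0 : ℝ)..T, ‖V t‖ := by
      apply intervalIntegral.integral_mono_on hT' hwint hVint
      intro t ht
      exact hwb t ht
    have hu0 : u 0 = ε := by
      simp only [hu, hc, hf0]
      rw [show (2 : ℝ) - 2 * 1 + ε ^ 2 = ε ^ 2 by ring, Real.sqrt_sq hε.le]
    have huT : Real.sqrt (2 - 2 * f T) ≤ u T := by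
      apply Real.sqrt_le_sqrt
      simp only [hc]; nlinarith
    calc Real.sqrt (2 - 2 * f T) ≤ u T := huT
      _ = u 0 + ∫ t in (0 : ℝ)..T, w t := by linarith [hftc]
      _ ≤ ε + v := by rw [hv]; linarith [hmono]
      _ = v + ε := by ring
  have hsqrtle : Real.sqrt (2 - 2 * f T) ≤ v :=
    le_of_forall_pos_le_add key
  have hTineq : 2 - 2 * f T ≤ v ^ 2 := by
    have h1 : 2 - 2 * f T = Real.sqrt (2 - 2 * f T) ^ 2 :=
      (Real.sq_sqrt (hfle T hTmem)).symm
    rw [h1]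
    exact pow_le_pow_left₀ (Real.sqrt_nonneg _) hsqrtle 2
  constructor
  · show f T ≥ 1 - v ^ 2 / 2
    linarith
  · linarith
end

section
/- Let H be a complex Hilbert space with a Hilbert basis (eₙ)ₙ indexed by a type ι, let ψ, φ ∈ H be unit vectors, and fix m ∈ ι. Write Cₙ = ⟨eₙ, ψ⟩ and Dₙ = ⟨eₙ, φ⟩, and suppose |C_m|² = 1 - ε² with 0 ≤ ε < 1. Then |⟨ψ, φ⟩| ≤ √(1 - ε²)·|D_m| + ε·√(1 - |D_m|²) ≤ √(1 - ε²)·|D_m| + ε. -/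
/-- The chain of inequalities in the proof of Corollary 2: for unit vectors `ψ, φ`
expanded in a Hilbert (measurement) basis `e`, with `|⟨e m, ψ⟩|² = 1 - ε²`,
the overlap satisfies
`|⟨ψ, φ⟩| ≤ √(1 - ε²) |D_m| + ε √(1 - |D_m|²) ≤ √(1 - ε²) |D_m| + ε`. -/
theorem overlap_le_amplitude_bound
    {H : Type*} [NormedAddCommGroup H] [InnerProductSpace ℂ H] [CompleteSpace H]
    {ι : Type*} (e : HilbertBasis ι ℂ H)
    (ψ φ : H) (hψ : ‖ψ‖ = 1) (hφ : ‖φ‖ = 1)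
    (m : ι) (ε : ℝ) (hε0 : 0 ≤ ε) (hε1 : ε < 1)
    (hCm : ‖(inner ℂ (e m) ψ : ℂ)‖ ^ 2 = 1 - ε ^ 2) :
    ‖(inner ℂ ψ φ : ℂ)‖ ≤
        Real.sqrt (1 - ε ^ 2) * ‖(inner ℂ (e m) φ : ℂ)‖ +
          ε * Real.sqrt (1 - ‖(inner ℂ (e m) φ : ℂ)‖ ^ 2) ∧
      Real.sqrt (1 - ε ^ 2) * ‖(inner ℂ (e m) φ : ℂ)‖ +
          ε * Real.sqrt (1 - ‖(inner ℂ (e m) φ : ℂ)‖ ^ 2) ≤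
        Real.sqrt (1 - ε ^ 2) * ‖(inner ℂ (e m) φ : ℂ)‖ + ε := by
  set c : ℂ := inner ℂ (e m) ψ with hc
  set d : ℂ := inner ℂ (e m) φ with hd
  have hem : ‖e m‖ = 1 := e.orthonormal.1 m
  have hee : (inner ℂ (e m) (e m) : ℂ) = 1 := by
    rw [inner_self_eq_norm_sq_to_K, hem]; norm_num
  set u : H := ψ - c • e m with hu
  set v : H := φ - d • e m with hv
  have hemu : (inner ℂ (e m) u : ℂ) = 0 := by
    simp [hu, inner_sub_right, inner_smul_right, hee, hem, hc]
  have hemv : (inner ℂ (e m) v : ℂ) = 0 := by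
    simp [hv, inner_sub_right, inner_smul_right, hee, hem, hd]
  have hume : (inner ℂ u (e m) : ℂ) = 0 := by
    rw [← inner_conj_symm, hemu, map_zero]
  have hvme : (inner ℂ v (e m) : ℂ) = 0 := by
    rw [← inner_conj_symm, hemv, map_zero]
  have hψeq : ψ = c • e m + u := by simp [hu]
  have hφeq : φ = d • e m + v := by simp [hv]
  have hsplit : (inner ℂ ψ φ : ℂ) = (starRingEnd ℂ) c * d + inner ℂ u v := by
    conv_lhs => rw [hψeq, hφeq]
    simp [inner_add_left, inner_add_right, inner_smul_left, inner_smul_right,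
      hee, hemv, hume, hem]
    ring
  -- norm of u
  have hnormψ : ‖ψ‖ ^ 2 = ‖c‖ ^ 2 + ‖u‖ ^ 2 := by
    conv_lhs => rw [hψeq]
    rw [@norm_add_sq ℂ]
    rw [inner_smul_left, hemu]
    simp [norm_smul, hem, Complex.sq_norm]
  have hnormφ : ‖φ‖ ^ 2 = ‖d‖ ^ 2 + ‖v‖ ^ 2 := by
    conv_lhs => rw [hφeq]
    rw [@norm_add_sq ℂ]
    rw [inner_smul_left, hemv]
    simp [norm_smul, hem, Complex.sq_norm]
  have hu2 : ‖u‖ ^ 2 = ε ^ 2 := by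
    have := hnormψ; rw [hψ, hCm] at this; linarith
  have hnu : ‖u‖ = ε := by
    have h1 : (0:ℝ) ≤ ‖u‖ := norm_nonneg _
    nlinarith [hu2]
  have hv2 : ‖v‖ ^ 2 = 1 - ‖d‖ ^ 2 := by
    have := hnormφ; rw [hφ] at this; linarith
  have hnv : ‖v‖ = Real.sqrt (1 - ‖d‖ ^ 2) := by
    rw [← hv2, Real.sqrt_sq (norm_nonneg _)]
  have habsc : ‖c‖ = Real.sqrt (1 - ε ^ 2) := by
    rw [← hCm, Real.sqrt_sq (norm_nonneg _)]
  have hd1 : ‖d‖ ≤ 1 := by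
    have h := norm_inner_le_norm (𝕜 := ℂ) (e m) φ
    rw [hem, hφ, one_mul] at h; exact h
  constructor
  · calc ‖(inner ℂ ψ φ : ℂ)‖
        ≤ ‖(starRingEnd ℂ) c * d‖ + ‖(inner ℂ u v : ℂ)‖ := by
          rw [hsplit]; exact norm_add_le _ _
    _ ≤ ‖c‖ * ‖d‖ + ‖u‖ * ‖v‖ := by
          rw [norm_mul, Complex.norm_conj]
          exact add_le_add le_rfl
            (by simpa using norm_inner_le_norm (𝕜 := ℂ) u v)
    _ = Real.sqrt (1 - ε ^ 2) * ‖d‖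
          + ε * Real.sqrt (1 - ‖d‖ ^ 2) := by rw [habsc, hnu, hnv]
  · have : Real.sqrt (1 - ‖d‖ ^ 2) ≤ 1 := by
      calc Real.sqrt (1 - ‖d‖ ^ 2) ≤ Real.sqrt 1 :=
            Real.sqrt_le_sqrt (by nlinarith [norm_nonneg d])
        _ = 1 := Real.sqrt_one
    nlinarith [this, hε0]
end

section
/- Let H be a complex Hilbert space with a Hilbert basis (eₙ)ₙ indexed by a type ι, let ψ, φ ∈ H be unit vectors, fix m ∈ ι, and let v ≥ 0 and 0 ≤ ε < 1 satisfy 1 - v²/2 > ε. Suppose Re⟨ψ, φ⟩ ≥ 1 - v²/2 and |⟨e_m, ψ⟩|² = 1 - ε². Then |⟨e_m, φ⟩| ≥ (1 - v²/2 - ε) / √(1 - ε²) > 0. -/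
/-- Abstract content of Corollary 2: if the unit vectors `ψ` (error-free final
state) and `φ` (final state with control errors) satisfy
`Re ⟨ψ, φ⟩ ≥ 1 - v²/2` and the target amplitude satisfies `|⟨e m, ψ⟩|² = 1 - ε²`
with `1 - v²/2 > ε`, then the erroneous amplitude `|⟨e m, φ⟩|` is bounded below
by the positive quantity `(1 - v²/2 - ε)/√(1 - ε²)`. -/
theorem amplitude_lower_bound
    {H : Type*} [NormedAddCommGroup H] [InnerProductSpace ℂ H] [CompleteSpace H]
    {ι : Type*} (e : HilbertBasis ι ℂ H)
    (ψ φ : H) (hψ : ‖ψ‖ = 1) (hφ : ‖φ‖ = 1)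
    (m : ι) (v ε : ℝ) (hv0 : 0 ≤ v) (hε0 : 0 ≤ ε) (hε1 : ε < 1)
    (hthreshold : 1 - v ^ 2 / 2 > ε)
    (hoverlap : (inner ℂ ψ φ : ℂ).re ≥ 1 - v ^ 2 / 2)
    (hCm : ‖(inner ℂ (e m) ψ : ℂ)‖ ^ 2 = 1 - ε ^ 2) :
    ‖(inner ℂ (e m) φ : ℂ)‖ ≥ (1 - v ^ 2 / 2 - ε) / Real.sqrt (1 - ε ^ 2) ∧
      (1 - v ^ 2 / 2 - ε) / Real.sqrt (1 - ε ^ 2) > 0 := by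
  have hem : ‖e m‖ = 1 := e.orthonormal.1 m
  set K : Submodule ℂ H := ℂ ∙ (e m) with hK
  have hPψ : (K.orthogonalProjection ψ : H) = (inner ℂ (e m) ψ : ℂ) • e m :=
    Submodule.starProjection_unit_singleton ℂ hem ψ
  have hPφ : (K.orthogonalProjection φ : H) = (inner ℂ (e m) φ : ℂ) • e m :=
    Submodule.starProjection_unit_singleton ℂ hem φ
  have hnPψ : ‖(K.orthogonalProjection ψ : H)‖ = Real.sqrt (1 - ε ^ 2) := by
    rw [hPψ, norm_smul, hem, mul_one, ← hCm,
      Real.sqrt_sq (norm_nonneg _)]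
  have hnPφ : ‖(K.orthogonalProjection φ : H)‖ = ‖(inner ℂ (e m) φ : ℂ)‖ := by
    rw [hPφ, norm_smul, hem, mul_one]
  -- decomposition of inner product
  have hdec : (inner ℂ ψ φ : ℂ) =
      inner ℂ ((K.orthogonalProjection ψ : H)) ((K.orthogonalProjection φ : H)) +
      inner ℂ (ψ - K.orthogonalProjection ψ) (φ - K.orthogonalProjection φ) := by
    have h1 : (inner ℂ ((K.orthogonalProjection ψ : H)) (φ - K.orthogonalProjection φ) : ℂ) = 0 := by
      have := Submodule.sub_starProjection_mem_orthogonal (K := K) φ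
      exact (Submodule.mem_orthogonal K _).1 this _ (K.orthogonalProjection ψ).2
    have h2 : (inner ℂ (ψ - (K.orthogonalProjection ψ : H)) ((K.orthogonalProjection φ : H)) : ℂ) = 0 := by
      have := Submodule.sub_starProjection_mem_orthogonal (K := K) ψ
      exact inner_eq_zero_symm.mp (this _ (K.orthogonalProjection φ).2)
    have : (inner ℂ ψ φ : ℂ) = inner ℂ ((K.orthogonalProjection ψ : H) + (ψ - K.orthogonalProjection ψ))
        ((K.orthogonalProjection φ : H) + (φ - K.orthogonalProjection φ)) := by
      congr 1 <;> abel
    rw [this, inner_add_left, inner_add_right, inner_add_right, h1, h2]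
    ring
  -- norms of residuals
  have hresψ : ‖ψ - (K.orthogonalProjection ψ : H)‖ = ε := by
    have hp : ‖ψ‖ ^ 2 = ‖(K.orthogonalProjection ψ : H)‖ ^ 2 + ‖ψ - (K.orthogonalProjection ψ : H)‖ ^ 2 := by
      simpa only [Submodule.coe_norm, Submodule.coe_orthogonalProjectionOnto_apply, Submodule.starProjection_orthogonal_val]
        using Submodule.norm_sq_eq_add_norm_sq_projection ψ K
    rw [hψ, hnPψ, Real.sq_sqrt] at hp
    · have : ‖ψ - (K.orthogonalProjection ψ : H)‖ ^ 2 = ε ^ 2 := by linarith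
      nlinarith [norm_nonneg (ψ - (K.orthogonalProjection ψ : H))]
    · nlinarith
  have hresφ : ‖φ - (K.orthogonalProjection φ : H)‖ ≤ 1 := by
    have hp : ‖φ‖ ^ 2 = ‖(K.orthogonalProjection φ : H)‖ ^ 2 + ‖φ - (K.orthogonalProjection φ : H)‖ ^ 2 := by
      simpa only [Submodule.coe_norm, Submodule.coe_orthogonalProjectionOnto_apply, Submodule.starProjection_orthogonal_val]
        using Submodule.norm_sq_eq_add_norm_sq_projection φ K
    nlinarith [norm_nonneg (φ - (K.orthogonalProjection φ : H)), norm_nonneg ((K.orthogonalProjection φ : H))]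
  -- bound
  have key : 1 - v ^ 2 / 2 ≤ Real.sqrt (1 - ε ^ 2) * ‖(inner ℂ (e m) φ : ℂ)‖ + ε := by
    have h1 : (inner ℂ ψ φ : ℂ).re ≤
        ‖(inner ℂ ((K.orthogonalProjection ψ : H)) ((K.orthogonalProjection φ : H)) : ℂ)‖ +
        ‖(inner ℂ (ψ - (K.orthogonalProjection ψ : H)) (φ - (K.orthogonalProjection φ : H)) : ℂ)‖ := by
      rw [hdec]
      calc (_ + _ : ℂ).re ≤ ‖(_ + _ : ℂ)‖ := Complex.re_le_norm _
        _ ≤ _ := norm_add_le _ _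
    have h2 := norm_inner_le_norm (𝕜 := ℂ) ((K.orthogonalProjection ψ : H)) ((K.orthogonalProjection φ : H))
    have h3 := norm_inner_le_norm (𝕜 := ℂ) (ψ - (K.orthogonalProjection ψ : H)) (φ - (K.orthogonalProjection φ : H))
    rw [hnPψ, hnPφ] at h2
    rw [hresψ] at h3
    have h4 : ε * ‖φ - (K.orthogonalProjection φ : H)‖ ≤ ε := by
      nlinarith
    linarith [hoverlap]
  have hs : (0:ℝ) < Real.sqrt (1 - ε ^ 2) := Real.sqrt_pos.2 (by nlinarith)
  have hs1 : Real.sqrt (1 - ε ^ 2) ≤ 1 := by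
    have := Real.sqrt_le_sqrt (show 1 - ε ^ 2 ≤ 1 by nlinarith)
    rwa [Real.sqrt_one] at this
  constructor
  · rw [ge_iff_le, div_le_iff₀ hs]
    linarith [key, mul_comm (Real.sqrt (1 - ε ^ 2)) (‖(inner ℂ (e m) φ : ℂ)‖)]
  · apply div_pos (by linarith) hs
end

section
/- Let H be a complex Hilbert space with a Hilbert basis (eₙ)ₙ indexed by a type ι, let T > 0, and let Ĥ, V̂ : ℝ → (H →L[ℂ] H) be continuous families of bounded self-adjoint operators with v := ∫₀^T ‖V̂(t)‖ dt. Let ψ, φ : ℝ → H be differentiable with ψ'(t) = -i·Ĥ(t)(ψ(t)) and φ'(t) = -i·(Ĥ(t) + V̂(t))(φ(t)) for all t ∈ [0,T], and suppose ψ(0) = φ(0) with ‖ψ(0)‖ = 1. Fix m ∈ ι and 0 ≤ ε < 1 with |⟨e_m, ψ(T)⟩|² = 1 - ε². If 1 - v²/2 > ε, then |⟨e_m, φ(T)⟩| ≥ (1 - v²/2 - ε)/√(1 - ε²) > 0. -/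
set_option maxHeartbeats 1000000

open Complex Set

local notation "⟪" x ", " y "⟫" => @inner ℂ _ _ x y

lemma aux_norm_conserved {H : Type*} [NormedAddCommGroup H] [InnerProductSpace ℂ H]
    [CompleteSpace H] {T : ℝ} (A : ℝ → (H →L[ℂ] H)) (hAsa : ∀ t, IsSelfAdjoint (A t))
    (χ : ℝ → H) (hχ : ∀ t ∈ Set.Icc (0 : ℝ) T, HasDerivAt χ ((-Complex.I) • (A t) (χ t)) t) :
    ∀ t ∈ Set.Icc (0 : ℝ) T, ‖χ t‖ = ‖χ 0‖ := by
  intro t ht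
  have hconst : ∀ s ∈ Set.Icc (0 : ℝ) T, ⟪χ s, χ s⟫ = ⟪χ 0, χ 0⟫ := by
    apply constant_of_has_deriv_right_zero
    · exact fun s hs => ((hχ s hs).continuousAt.continuousWithinAt).inner
        ((hχ s hs).continuousAt.continuousWithinAt)
    · intro s hs
      have hs' : s ∈ Set.Icc (0 : ℝ) T := Set.mem_Icc_of_Ico hs
      have h1 := HasDerivAt.inner ℂ (hχ s hs') (hχ s hs')
      have h2 : ⟪χ s, (-Complex.I) • (A s) (χ s)⟫ + ⟪(-Complex.I) • (A s) (χ s), χ s⟫ = 0 := by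
        have hA : ⟪(A s) (χ s), χ s⟫ = ⟪χ s, (A s) (χ s)⟫ := by
          conv_lhs => rw [← (ContinuousLinearMap.isSelfAdjoint_iff'.mp (hAsa s))]
          exact ContinuousLinearMap.adjoint_inner_left _ _ _
        rw [inner_smul_right, inner_smul_left, hA]
        simp
      rw [h2] at h1
      exact h1.hasDerivWithinAt
  have := hconst t ht
  rw [inner_self_eq_norm_sq_to_K, inner_self_eq_norm_sq_to_K] at this
  have h2 : ‖χ t‖ ^ 2 = ‖χ 0‖ ^ 2 := by exact_mod_cast this
  nlinarith [norm_nonneg (χ t), norm_nonneg (χ 0)]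

lemma aux_diff_bound {H : Type*} [NormedAddCommGroup H] [InnerProductSpace ℂ H]
    [CompleteSpace H] {T : ℝ} (hT : 0 < T) (Hop V : ℝ → (H →L[ℂ] H))
    (hVcont : Continuous V) (hHsa : ∀ t, IsSelfAdjoint (Hop t))
    (ψ φ : ℝ → H)
    (hψ : ∀ t ∈ Set.Icc (0 : ℝ) T, HasDerivAt ψ ((-Complex.I) • (Hop t) (ψ t)) t)
    (hφ : ∀ t ∈ Set.Icc (0 : ℝ) T, HasDerivAt φ ((-Complex.I) • ((Hop t + V t) (φ t))) t)
    (h0 : ψ 0 = φ 0) (hφ1 : ∀ t ∈ Set.Icc (0 : ℝ) T, ‖φ t‖ = 1) :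
    ‖ψ T - φ T‖ ≤ ∫ t in (0 : ℝ)..T, ‖V t‖ := by
  set W : ℝ → ℝ := fun x => ∫ s in (0 : ℝ)..x, ‖V s‖ with hWdef
  have hW : ∀ x : ℝ, HasDerivAt W ‖V x‖ x := fun x =>
    intervalIntegral.integral_hasDerivAt_right ((hVcont.norm).intervalIntegrable _ _)
      ((hVcont.norm).stronglyMeasurableAtFilter _ _) (hVcont.norm.continuousAt)
  have hWnonneg : ∀ x : ℝ, 0 ≤ x → 0 ≤ W x := fun x hx =>
    intervalIntegral.integral_nonneg hx (fun s _ => norm_nonneg _)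
  -- main estimate for each ε' > 0
  have key : ∀ ε' : ℝ, 0 < ε' → ‖ψ T - φ T‖ ≤ ε' * (1 + T) + W T := by
    intro ε' hε'
    set δ : ℝ → H := fun t => ψ t - φ t with hδdef
    set D : ℝ → H := fun t =>
      (-Complex.I) • (Hop t) (ψ t) - (-Complex.I) • ((Hop t + V t) (φ t)) with hDdef
    have hδ : ∀ t ∈ Set.Icc (0 : ℝ) T, HasDerivAt δ (D t) t := fun t ht =>
      (hψ t ht).sub (hφ t ht)
    set g : ℝ → ℝ := fun t => (⟪δ t, δ t⟫).re with hgdef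
    set G' : ℝ → ℝ := fun t => (⟪δ t, D t⟫ + ⟪D t, δ t⟫).re with hG'def
    have hg : ∀ t ∈ Set.Icc (0 : ℝ) T, HasDerivAt g (G' t) t := by
      intro t ht
      have h1 := HasDerivAt.inner ℂ (hδ t ht) (hδ t ht)
      exact (Complex.reCLM.hasFDerivAt.comp_hasDerivAt t h1)
    have hgnorm : ∀ t, g t = ‖δ t‖ ^ 2 := fun t => inner_self_eq_norm_sq (𝕜 := ℂ) (δ t)
    set B : ℝ → ℝ := fun x => (ε' * (1 + x) + W x) ^ 2 with hBdef
    set B' : ℝ → ℝ := fun x => 2 * (ε' * (1 + x) + W x) ^ 1 * (ε' + ‖V x‖) with hB'def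
    have hB : ∀ x, HasDerivAt B (B' x) x := by
      intro x
      have h1 : HasDerivAt (fun x : ℝ => ε' * (1 + x)) ε' x := by
        simpa using ((hasDerivAt_id x).const_add (1 : ℝ)).const_mul ε'
      have h2 := (h1.add (hW x)).pow 2
      have h3 : B' x = ((2 : ℕ) : ℝ) * ((fun x => ε' * (1 + x)) + W) x ^ (2 - 1) * (ε' + ‖V x‖) := by
        show 2 * (ε' * (1 + x) + W x) ^ 1 * (ε' + ‖V x‖) = _
        norm_num
      rw [h3]
      exact h2
    have hbound : ∀ x ∈ Set.Ico (0 : ℝ) T, g x = B x → G' x < B' x := by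
      intro x hx hgB
      have hx' : x ∈ Set.Icc (0 : ℝ) T := Set.mem_Icc_of_Ico hx
      have hDx : D x = (-Complex.I) • (Hop x) (δ x) + Complex.I • (V x) (φ x) := by
        simp only [hDdef, hδdef, map_sub, smul_sub, smul_add, ContinuousLinearMap.add_apply]
        module
      have him : (⟪δ x, (Hop x) (δ x)⟫).im = 0 := by
        have hsym : ⟪(Hop x) (δ x), δ x⟫ = ⟪δ x, (Hop x) (δ x)⟫ := by
          conv_lhs => rw [← (ContinuousLinearMap.isSelfAdjoint_iff'.mp (hHsa x))]
          exact ContinuousLinearMap.adjoint_inner_left _ _ _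
        have hc : (starRingEnd ℂ) ⟪δ x, (Hop x) (δ x)⟫ = ⟪δ x, (Hop x) (δ x)⟫ := by
          rw [inner_conj_symm]; exact hsym
        exact Complex.conj_eq_iff_im.mp hc
      have hre : (⟪δ x, D x⟫).re ≤ ‖δ x‖ * ‖V x‖ := by
        rw [hDx, inner_add_right, inner_smul_right, inner_smul_right]
        have h2 : (Complex.I * ⟪δ x, (V x) (φ x)⟫).re ≤ ‖δ x‖ * ‖V x‖ := by
          have h3 : (Complex.I * ⟪δ x, (V x) (φ x)⟫).re ≤ ‖⟪δ x, (V x) (φ x)⟫‖ := by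
            have he : (Complex.I * ⟪δ x, (V x) (φ x)⟫).re = -(⟪δ x, (V x) (φ x)⟫).im := by
              simp [Complex.mul_re]
            rw [he]
            calc -(⟪δ x, (V x) (φ x)⟫).im ≤ |(⟪δ x, (V x) (φ x)⟫).im| := neg_le_abs _
              _ ≤ ‖(⟪δ x, (V x) (φ x)⟫)‖ := Complex.abs_im_le_norm _
              _ = ‖_‖ := rfl
          refine h3.trans ?_
          have h4 : ‖⟪δ x, (V x) (φ x)⟫‖ ≤ ‖δ x‖ * ‖(V x) (φ x)‖ :=
            norm_inner_le_norm _ _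
          refine h4.trans ?_
          have h5 : ‖(V x) (φ x)‖ ≤ ‖V x‖ * ‖φ x‖ := (V x).le_opNorm _
          rw [hφ1 x hx', mul_one] at h5
          exact mul_le_mul_of_nonneg_left h5 (norm_nonneg _)
        calc ((-Complex.I) * ⟪δ x, (Hop x) (δ x)⟫).re + (Complex.I * ⟪δ x, (V x) (φ x)⟫).re
            = (Complex.I * ⟪δ x, (V x) (φ x)⟫).re := by
              rw [Complex.mul_re]
              simp [him]
          _ ≤ ‖δ x‖ * ‖V x‖ := h2
      have hG'x : G' x ≤ 2 * (‖δ x‖ * ‖V x‖) := by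
        have : (⟪D x, δ x⟫) = (starRingEnd ℂ) (⟪δ x, D x⟫) := (inner_conj_symm _ _).symm
        rw [hG'def]
        simp only [this, Complex.add_re, Complex.conj_re]
        linarith [hre]
      have hP : 0 < ε' * (1 + x) + W x := by
        have := hWnonneg x hx.1
        nlinarith [hx.1]
      have hδeq : ‖δ x‖ = ε' * (1 + x) + W x := by
        have h6 : ‖δ x‖ ^ 2 = (ε' * (1 + x) + W x) ^ 2 := by rw [← hgnorm]; exact hgB
        nlinarith [norm_nonneg (δ x)]
      have : B' x = 2 * (ε' * (1 + x) + W x) * (ε' + ‖V x‖) := by rw [hB'def]; ring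
      rw [this]
      rw [hδeq] at hG'x
      nlinarith [norm_nonneg (V x), hP]
    have hgcont : ContinuousOn g (Set.Icc (0 : ℝ) T) := fun t ht =>
      ((hg t ht).continuousAt).continuousWithinAt
    have ha : g 0 ≤ B 0 := by
      have : δ 0 = 0 := by simp [hδdef, h0]
      have hg0 : g 0 = 0 := by rw [hgnorm, this]; simp
      have hW0 : W 0 = 0 := by simp [hWdef]
      rw [hg0, hBdef]
      simp only [hW0]
      positivity
    have := image_le_of_deriv_right_lt_deriv_boundary hgcont
      (fun x hx => (hg x (Set.mem_Icc_of_Ico hx)).hasDerivWithinAt) ha hB hbound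
      (Set.right_mem_Icc.mpr hT.le)
    have hfin : ‖δ T‖ ^ 2 ≤ (ε' * (1 + T) + W T) ^ 2 := by rw [← hgnorm]; exact this
    have hP : 0 ≤ ε' * (1 + T) + W T := by nlinarith [hWnonneg T hT.le]
    nlinarith [norm_nonneg (δ T)]
  refine le_of_forall_pos_le_add ?_
  intro c hc
  have h1T : (0 : ℝ) < 1 + T := by linarith
  have := key (c / (1 + T)) (div_pos hc h1T)
  rw [div_mul_cancel₀ _ h1T.ne'] at this
  linarith

/-- Corollary 2 combined with Theorem 1: under the threshold condition
`1 - v²/2 > ε`, where `v = ∫₀ᵀ ‖V(t)‖ dt` is the integrated error strength, the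
amplitude of the target measurement outcome `e m` in the erroneous final state
`φ(T)` is bounded below by the positive quantity `(1 - v²/2 - ε)/√(1 - ε²)`,
independently of the computation time `T`. -/
theorem threshold_theorem_quantum_annealing
    {H : Type*} [NormedAddCommGroup H] [InnerProductSpace ℂ H] [CompleteSpace H]
    {ι : Type*} (e : HilbertBasis ι ℂ H)
    (T : ℝ) (hT : 0 < T)
    (Hop V : ℝ → (H →L[ℂ] H))
    (hHcont : Continuous Hop) (hVcont : Continuous V)
    (hHsa : ∀ t, IsSelfAdjoint (Hop t)) (hVsa : ∀ t, IsSelfAdjoint (V t))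
    (v : ℝ) (hv : v = ∫ t in (0 : ℝ)..T, ‖V t‖)
    (ψ φ : ℝ → H)
    (hψ : ∀ t ∈ Set.Icc (0 : ℝ) T, HasDerivAt ψ ((-Complex.I) • (Hop t) (ψ t)) t)
    (hφ : ∀ t ∈ Set.Icc (0 : ℝ) T, HasDerivAt φ ((-Complex.I) • ((Hop t + V t) (φ t))) t)
    (h0 : ψ 0 = φ 0) (hnorm : ‖ψ 0‖ = 1)
    (m : ι) (ε : ℝ) (hε0 : 0 ≤ ε) (hε1 : ε < 1)
    (hCm : ‖(inner ℂ (e m) (ψ T) : ℂ)‖ ^ 2 = 1 - ε ^ 2)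
    (hthreshold : 1 - v ^ 2 / 2 > ε) :
    ‖(inner ℂ (e m) (φ T) : ℂ)‖ ≥ (1 - v ^ 2 / 2 - ε) / Real.sqrt (1 - ε ^ 2) ∧
      (1 - v ^ 2 / 2 - ε) / Real.sqrt (1 - ε ^ 2) > 0 := by
  have hTmem : T ∈ Set.Icc (0 : ℝ) T := Set.right_mem_Icc.mpr hT.le
  -- norm conservation
  have hψ1 : ‖ψ T‖ = 1 := by
    rw [aux_norm_conserved Hop hHsa ψ hψ T hTmem, hnorm]
  have hφ1 : ∀ t ∈ Set.Icc (0 : ℝ) T, ‖φ t‖ = 1 := by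
    intro t ht
    rw [aux_norm_conserved (fun t => Hop t + V t) (fun t => (hHsa t).add (hVsa t)) φ hφ t ht,
      ← h0, hnorm]
  have hφT1 : ‖φ T‖ = 1 := hφ1 T hTmem
  -- difference bound
  have hdiff : ‖ψ T - φ T‖ ≤ v := by
    rw [hv]; exact aux_diff_bound hT Hop V hVcont hHsa ψ φ hψ hφ h0 hφ1
  have hvnn : 0 ≤ v := le_trans (norm_nonneg _) hdiff
  -- fidelity bound
  have hfid : 1 - v ^ 2 / 2 ≤ (⟪ψ T, φ T⟫).re := by
    have hexp : ‖ψ T - φ T‖ ^ 2 = ‖ψ T‖ ^ 2 - 2 * (⟪ψ T, φ T⟫).re + ‖φ T‖ ^ 2 :=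
      @norm_sub_sq ℂ _ _ _ _ (ψ T) (φ T)
    rw [hψ1, hφT1] at hexp
    nlinarith [norm_nonneg (ψ T - φ T)]
  set c : ℂ := ⟪e m, ψ T⟫ with hcdef
  set a : ℂ := ⟪e m, φ T⟫ with hadef
  have hc2 : ‖c‖ ^ 2 = 1 - ε ^ 2 := by exact hCm
  have hem : ‖e m‖ = 1 := e.orthonormal.1 m
  -- the orthogonal complement piece
  have hw2 : ‖ψ T - c • e m‖ ^ 2 = ε ^ 2 := by
    have hexp : ‖ψ T - c • e m‖ ^ 2 = ‖ψ T‖ ^ 2 - 2 * (⟪ψ T, c • e m⟫).re + ‖c • e m‖ ^ 2 :=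
      @norm_sub_sq ℂ _ _ _ _ (ψ T) (c • e m)
    have h1 : ⟪ψ T, c • e m⟫ = c * (starRingEnd ℂ) c := by
      rw [inner_smul_right, ← inner_conj_symm, ← hcdef]
    have h2 : (⟪ψ T, c • e m⟫).re = ‖c‖ ^ 2 := by
      rw [h1, Complex.mul_conj, Complex.ofReal_re, Complex.normSq_eq_norm_sq]
    have h3 : ‖c • e m‖ ^ 2 = ‖c‖ ^ 2 := by
      rw [norm_smul, hem, mul_one]
    rw [hexp, h2, h3, hψ1, hc2]
    ring
  have hwle : ‖ψ T - c • e m‖ = ε := by nlinarith [norm_nonneg (ψ T - c • e m)]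
  -- split the overlap
  have hsplit : ⟪ψ T, φ T⟫ = (starRingEnd ℂ) c * a + ⟪ψ T - c • e m, φ T⟫ := by
    rw [inner_sub_left, inner_smul_left, hadef]
    ring
  have hova : ‖⟪ψ T - c • e m, φ T⟫‖ ≤ ε := by
    calc ‖⟪ψ T - c • e m, φ T⟫‖ ≤ ‖ψ T - c • e m‖ * ‖φ T‖ := norm_inner_le_norm _ _
      _ = ε := by rw [hwle, hφT1, mul_one]
  have hkey : 1 - v ^ 2 / 2 - ε ≤ ‖c‖ * ‖a‖ := by
    have h1 : (⟪ψ T, φ T⟫).re ≤ ‖⟪ψ T, φ T⟫‖ := Complex.re_le_norm _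
    have h2 : ‖⟪ψ T, φ T⟫‖ ≤ ‖c‖ * ‖a‖ + ε := by
      rw [hsplit]
      calc ‖(starRingEnd ℂ) c * a + ⟪ψ T - c • e m, φ T⟫‖
          ≤ ‖(starRingEnd ℂ) c * a‖ + ‖⟪ψ T - c • e m, φ T⟫‖ := norm_add_le _ _
        _ ≤ ‖c‖ * ‖a‖ + ε := by
            rw [norm_mul, RCLike.norm_conj]
            linarith [hova]
    linarith
  have hsq : Real.sqrt (1 - ε ^ 2) = ‖c‖ := by
    rw [← hc2, Real.sqrt_sq (norm_nonneg c)]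
  have hcpos : 0 < ‖c‖ := by
    rw [← hsq]
    exact Real.sqrt_pos.mpr (by nlinarith)
  constructor
  · rw [ge_iff_le, hsq, div_le_iff₀ hcpos]
    calc 1 - v ^ 2 / 2 - ε ≤ ‖c‖ * ‖a‖ := hkey
      _ = ‖a‖ * ‖c‖ := mul_comm _ _
  · exact div_pos (by linarith) (hsq ▸ hcpos)
end
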